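/- arXiv:1009.0150 — 3 statements merged into one kernel-verified Lean document; each statement's English description precedes it below -/
import Mathlib

section
/- For Schwartz functions f, g on ℝ² and any σ ∈ ℝ, ∬ (f ⋆_σ g)(x,p) dx dp = ∬ (g ⋆_σ f)(x,p) dx dp. -/
open MeasureTheory Complex Real

/-- The `hbar`-normalized Fourier transform on the phase space `ℝ²`:
`Ff(ξ,η) = (1/(2πhbar)) ∬ f(x,p) e^{−(i/hbar)(ξx − ηp)} dx dp`. -/
noncomputable def FT (hbar : ℝ) (f : ℝ × ℝ → ℂ) : ℝ × ℝ → ℂ := fun w =>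
  (1 / (2 * π * hbar) : ℂ) *
    ∫ z : ℝ × ℝ, f z * Complex.exp (-(Complex.I / hbar) * (w.1 * z.1 - w.2 * z.2))

/-- The `σ`-star product on the phase space `ℝ²`, in its integral form:
`(f ⋆_σ g)(x,p) = (1/(2πhbar)) ∬ Ff(ξ,η) g(x − (1−σ)η, p − σξ) e^{(i/hbar)(ξx − ηp)} dξ dη`. -/
noncomputable def starProd (hbar σ : ℝ) (f g : ℝ × ℝ → ℂ) : ℝ × ℝ → ℂ := fun z =>
  (1 / (2 * π * hbar) : ℂ) *
    ∫ w : ℝ × ℝ, FT hbar f w * g (z.1 - (1 - σ) * w.2, z.2 - σ * w.1) *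
      Complex.exp ((Complex.I / hbar) * (w.1 * z.1 - w.2 * z.2))

/-! ### Auxiliary definitions and lemmas -/

open FourierTransform

/-- The phase factor `e^{(i/hbar)(ξx − ηp)}`. -/
noncomputable def Eph (hbar : ℝ) (w z : ℝ × ℝ) : ℂ :=
  Complex.exp ((Complex.I / hbar) * (w.1 * z.1 - w.2 * z.2))

/-- The (un-normalized, sign-flipped) Fourier integral `∫ h(z) e^{(i/hbar)(ξx − ηp)} dz`. -/
noncomputable def Jint (hbar : ℝ) (h : ℝ × ℝ → ℂ) (w : ℝ × ℝ) : ℂ :=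
  ∫ z : ℝ × ℝ, h z * Eph hbar w z

/-- The shift vector appearing in the star product. -/
def sv (σ : ℝ) (w : ℝ × ℝ) : ℝ × ℝ := ((1 - σ) * w.2, σ * w.1)

lemma norm_Eph (hbar : ℝ) (w z : ℝ × ℝ) : ‖Eph hbar w z‖ = 1 := by
  have : (Complex.I / hbar) * (w.1 * z.1 - w.2 * z.2)
      = ((w.1 * z.1 - w.2 * z.2) / hbar : ℝ) * Complex.I := by
    push_cast; ring
  rw [Eph, this, Complex.norm_exp_ofReal_mul_I]

lemma cont_Eph (hbar : ℝ) : Continuous (fun p : (ℝ × ℝ) × (ℝ × ℝ) => Eph hbar p.1 p.2) := by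
  unfold Eph
  fun_prop

lemma Eph_sub (hbar : ℝ) (w z s : ℝ × ℝ) :
    Eph hbar w z = Eph hbar w (z - s) * Eph hbar w s := by
  rw [Eph, Eph, Eph, ← Complex.exp_add]
  congr 1
  simp only [Prod.fst_sub, Prod.snd_sub]
  push_cast
  ring

lemma integral_translate (hbar : ℝ) (g : ℝ × ℝ → ℂ) (w s : ℝ × ℝ) :
    ∫ z : ℝ × ℝ, g (z - s) * Eph hbar w z = Eph hbar w s * Jint hbar g w := by
  have h1 : ∀ z : ℝ × ℝ, g (z - s) * Eph hbar w z
      = (fun z => g z * Eph hbar w z) (z - s) * Eph hbar w s := by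
    intro z
    rw [Eph_sub hbar w z s]
    ring
  simp_rw [h1]
  rw [integral_mul_const, integral_sub_right_eq_self (fun z => g z * Eph hbar w z) s]
  rw [Jint, mul_comm]

lemma FT_eq_Jint (hbar : ℝ) (f : ℝ × ℝ → ℂ) (w : ℝ × ℝ) :
    FT hbar f w = (1 / (2 * π * hbar) : ℂ) * Jint hbar f (-w) := by
  rw [FT, Jint]
  congr 1
  apply integral_congr_ae
  filter_upwards with z
  congr 1
  rw [Eph]
  congr 1
  simp only [Prod.fst_neg, Prod.snd_neg]
  push_cast
  ring

lemma Eph_neg_sv (hbar σ : ℝ) (w : ℝ × ℝ) :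
    Eph hbar (-w) (sv σ (-w)) = Eph hbar w (sv σ w) := by
  rw [Eph, Eph]
  congr 1
  simp only [sv, Prod.fst_neg, Prod.snd_neg]
  push_cast
  ring

/-! ### The Fourier transform of a Schwartz function is (essentially) Schwartz -/

noncomputable def prodToEuc (b c : ℝ) (hb : b ≠ 0) (hc : c ≠ 0) :
    (ℝ × ℝ) ≃ₗ[ℝ] EuclideanSpace ℝ (Fin 2) where
  toFun w := (WithLp.equiv 2 (Fin 2 → ℝ)).symm ![b * w.1, c * w.2]
  invFun v := (v 0 / b, v 1 / c)
  map_add' x y := by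
    apply PiLp.ext; intro i
    fin_cases i <;> simp [WithLp.equiv_symm_apply] <;> ring
  map_smul' r x := by
    apply PiLp.ext; intro i
    fin_cases i <;> simp [WithLp.equiv_symm_apply] <;> ring
  left_inv w := by
    simp [WithLp.equiv_symm_apply]
    exact Prod.ext (by field_simp) (by field_simp)
  right_inv v := by
    apply PiLp.ext; intro i
    fin_cases i <;> simp [WithLp.equiv_symm_apply] <;> field_simp

lemma inner_prodToEuc (b c : ℝ) (hb : b ≠ 0) (hc : c ≠ 0) (z : ℝ × ℝ)
    (v : EuclideanSpace ℝ (Fin 2)) :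
    (inner ℝ v (prodToEuc b c hb hc z) : ℝ) = v 0 * (b * z.1) + v 1 * (c * z.2) := by
  simp [prodToEuc, PiLp.inner_apply, Fin.sum_univ_two, WithLp.equiv_symm_apply,
    RCLike.inner_apply]
  ring

noncomputable def eucM : (ℝ × ℝ) ≃ᵐ EuclideanSpace ℝ (Fin 2) :=
  (MeasurableEquiv.finTwoArrow).symm.trans (MeasurableEquiv.toLp 2 (Fin 2 → ℝ))

lemma eucM_mp : MeasurePreserving eucM volume volume :=
  ((EuclideanSpace.volume_preserving_symm_measurableEquiv_toLp (Fin 2)).symm).comp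
    ((volume_preserving_finTwoArrow ℝ).symm)

lemma eucM_zero (z : ℝ × ℝ) : eucM z 0 = z.1 := rfl
lemma eucM_one (z : ℝ × ℝ) : eucM z 1 = z.2 := rfl

lemma integral_euc (h : EuclideanSpace ℝ (Fin 2) → ℂ) :
    ∫ z : ℝ × ℝ, h (eucM z) = ∫ v, h v :=
  eucM_mp.integral_comp eucM.measurableEmbedding h

lemma FT_exists_schwartz (hbar : ℝ) (hh : 0 < hbar) (f : SchwartzMap (ℝ × ℝ) ℂ) :
    ∃ F : SchwartzMap (ℝ × ℝ) ℂ, ⇑F = FT hbar f := by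
  have hπ : (π : ℝ) ≠ 0 := Real.pi_ne_zero
  have hb : hbar ≠ 0 := ne_of_gt hh
  set a : ℝ := 1 / (2 * π * hbar) with ha_def
  have ha : a ≠ 0 := by
    rw [ha_def]; positivity
  have hna : -a ≠ 0 := neg_ne_zero.mpr ha
  let ι : (ℝ × ℝ) ≃L[ℝ] EuclideanSpace ℝ (Fin 2) :=
    (prodToEuc 1 1 one_ne_zero one_ne_zero).toContinuousLinearEquiv
  let A : (ℝ × ℝ) ≃L[ℝ] EuclideanSpace ℝ (Fin 2) :=
    (prodToEuc a (-a) ha hna).toContinuousLinearEquiv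
  let fS : SchwartzMap (EuclideanSpace ℝ (Fin 2)) ℂ :=
    SchwartzMap.compCLMOfContinuousLinearEquiv ℝ ι.symm f
  refine ⟨(1 / (2 * π * hbar) : ℂ) •
      SchwartzMap.compCLMOfContinuousLinearEquiv ℝ A
        (SchwartzMap.fourierTransformCLM ℂ fS), ?_⟩
  funext w
  have h1 : (SchwartzMap.compCLMOfContinuousLinearEquiv ℝ A
      (SchwartzMap.fourierTransformCLM ℂ fS)) w = 𝓕 (⇑fS) (A w) := rfl
  have h2 : 𝓕 (⇑fS) (A w)
      = ∫ v, Complex.exp ((↑(-2 * π * (inner ℝ v (A w) : ℝ)) * Complex.I)) • fS v :=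
    Real.fourier_eq' (⇑fS) (A w)
  rw [SchwartzMap.smul_apply, h1, h2, ← integral_euc]
  rw [FT]
  rw [smul_eq_mul]
  congr 1
  apply integral_congr_ae
  filter_upwards with z
  have hfS : fS (eucM z) = f z := by
    have : ι.symm (eucM z) = z := by
      show (prodToEuc 1 1 one_ne_zero one_ne_zero).symm (eucM z) = z
      show ((eucM z) 0 / 1, (eucM z) 1 / 1) = z
      simp [eucM_zero, eucM_one]
    show f (ι.symm (eucM z)) = f z
    rw [this]
  have hin : (inner ℝ (eucM z) (A w) : ℝ) = z.1 * (a * w.1) + z.2 * (-a * w.2) := by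
    have := inner_prodToEuc a (-a) ha hna w (eucM z)
    rw [eucM_zero, eucM_one] at this
    exact this
  rw [hfS, hin, smul_eq_mul, mul_comm]
  congr 1
  congr 1
  have : -2 * π * (z.1 * (a * w.1) + z.2 * (-a * w.2)) = -((w.1 * z.1 - w.2 * z.2) / hbar) := by
    rw [ha_def]; field_simp; ring
  rw [this]
  push_cast
  field_simp

/-! ### Integrability for Fubini -/

lemma key_integrable (hbar σ : ℝ) (F g : SchwartzMap (ℝ × ℝ) ℂ) :
    Integrable (fun p : (ℝ × ℝ) × (ℝ × ℝ) => F p.1 * g (p.2 - sv σ p.1) * Eph hbar p.1 p.2)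
      (volume : Measure ((ℝ × ℝ) × (ℝ × ℝ))) := by
  have hcont : Continuous
      (fun p : (ℝ × ℝ) × (ℝ × ℝ) => F p.1 * g (p.2 - sv σ p.1) * Eph hbar p.1 p.2) := by
    refine ((F.continuous.comp continuous_fst).mul
      (g.continuous.comp (continuous_snd.sub ?_))).mul (cont_Eph hbar)
    unfold sv
    fun_prop
  have hmeas := hcont.aestronglyMeasurable (μ := (volume : Measure ((ℝ × ℝ) × (ℝ × ℝ))))
  rw [Measure.volume_eq_prod (ℝ × ℝ) (ℝ × ℝ)] at hmeas ⊢
  rw [integrable_prod_iff hmeas]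
  constructor
  · filter_upwards with w
    have base : Integrable (fun z : ℝ × ℝ => g (z - sv σ w)) volume :=
      g.integrable.comp_sub_right (sv σ w)
    have hEc : Continuous (fun z : ℝ × ℝ => Eph hbar w z) := by
      unfold Eph; fun_prop
    have h1 : Integrable (fun z : ℝ × ℝ => Eph hbar w z * g (z - sv σ w)) volume :=
      base.bdd_mul (c := 1) hEc.aestronglyMeasurable
        (by filter_upwards with z; rw [norm_Eph])
    exact (h1.const_mul (F w)).congr (by filter_upwards with z; ring)
  · have hC : ∀ w : ℝ × ℝ, (∫ z : ℝ × ℝ, ‖F w * g (z - sv σ w) * Eph hbar w z‖)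
        = ‖F w‖ * ∫ z : ℝ × ℝ, ‖g z‖ := by
      intro w
      have : ∀ z : ℝ × ℝ, ‖F w * g (z - sv σ w) * Eph hbar w z‖
          = ‖F w‖ * (fun z : ℝ × ℝ => ‖g z‖) (z - sv σ w) := by
        intro z
        rw [norm_mul, norm_mul, norm_Eph, mul_one]
      simp_rw [this]
      rw [integral_const_mul, integral_sub_right_eq_self (fun z : ℝ × ℝ => ‖g z‖) (sv σ w)]
    refine ((F.integrable.norm.mul_const (∫ z : ℝ × ℝ, ‖g z‖)).congr ?_)
    filter_upwards with w
    exact (hC w).symm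

/-! ### Evaluation of the double integral -/

lemma integral_starProd_eq (hbar σ : ℝ) (hh : 0 < hbar) (f g : SchwartzMap (ℝ × ℝ) ℂ) :
    ∫ z : ℝ × ℝ, starProd hbar σ (⇑f) (⇑g) z
      = (1 / (2 * π * hbar) : ℂ) *
          ∫ w : ℝ × ℝ, FT hbar (⇑f) w * (Eph hbar w (sv σ w) * Jint hbar (⇑g) w) := by
  obtain ⟨F, hF⟩ := FT_exists_schwartz hbar hh f
  have hstar : ∀ z : ℝ × ℝ, starProd hbar σ (⇑f) (⇑g) z
      = (1 / (2 * π * hbar) : ℂ) *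
          ∫ w : ℝ × ℝ, F w * g (z - sv σ w) * Eph hbar w z := by
    intro z
    rw [starProd]
    congr 1
    apply integral_congr_ae
    filter_upwards with w
    rw [hF]
    rfl
  simp_rw [hstar]
  rw [integral_const_mul]
  congr 1
  have hkey : Integrable
      (Function.uncurry (fun w z : ℝ × ℝ => F w * g (z - sv σ w) * Eph hbar w z))
      ((volume : Measure (ℝ × ℝ)).prod volume) := by
    have := key_integrable hbar σ F g
    rw [Measure.volume_eq_prod (ℝ × ℝ) (ℝ × ℝ)] at this
    exact this
  rw [← integral_integral_swap hkey]
  apply integral_congr_ae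
  filter_upwards with w
  have : ∀ z : ℝ × ℝ, F w * g (z - sv σ w) * Eph hbar w z
      = F w * (g (z - sv σ w) * Eph hbar w z) := fun z => by ring
  simp_rw [this]
  rw [integral_const_mul, integral_translate hbar (⇑g) w (sv σ w), hF]

/-- For Schwartz functions `f, g` on `ℝ²` and any `σ ∈ ℝ`,
`∬ (f ⋆_σ g) dx dp = ∬ (g ⋆_σ f) dx dp`. -/
theorem stmt_3 (hbar σ : ℝ) (hh : 0 < hbar) (f g : SchwartzMap (ℝ × ℝ) ℂ) :
    ∫ z : ℝ × ℝ, starProd hbar σ (⇑f) (⇑g) z = ∫ z : ℝ × ℝ, starProd hbar σ (⇑g) (⇑f) z := by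
  rw [integral_starProd_eq hbar σ hh f g, integral_starProd_eq hbar σ hh g f]
  congr 1
  have hneg := (integral_neg_eq_self
    (fun w : ℝ × ℝ => FT hbar (⇑g) w * (Eph hbar w (sv σ w) * Jint hbar (⇑f) w))
    (volume : Measure (ℝ × ℝ))).symm
  rw [hneg]
  apply integral_congr_ae
  filter_upwards with w
  rw [FT_eq_Jint hbar (⇑g) (-w), FT_eq_Jint hbar (⇑f) w, Eph_neg_sv hbar σ w, neg_neg]
  ring
end

section
/- For Schwartz functions f, g on ℝ² and σ ∈ ℝ, the complex conjugate of f ⋆_σ g equals g* ⋆_{1−σ} f*. In particular, for the Moyal product (σ = 1/2), (f ⋆ g)* = g* ⋆ f*. -/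
open MeasureTheory Complex Real

namespace StarProdAux

noncomputable abbrev V := ℝ × ℝ
noncomputable abbrev Euc := EuclideanSpace ℝ (Fin 2)

/-! ### The elementary phase -/

noncomputable def Ph (r : ℝ) : ℂ := Complex.exp (r * Complex.I)

lemma Ph_norm (r : ℝ) : ‖Ph r‖ = 1 := by
  simp [Ph, Complex.norm_exp_ofReal_mul_I]

lemma Ph_conj (r : ℝ) : (starRingEnd ℂ) (Ph r) = Ph (-r) := by
  unfold Ph
  rw [← Complex.exp_conj]
  congr 1
  simp [Complex.conj_ofReal]

lemma Ph_add (a b : ℝ) : Ph a * Ph b = Ph (a + b) := by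
  unfold Ph
  rw [← Complex.exp_add]
  congr 1
  push_cast
  ring

lemma Ph_continuous : Continuous Ph :=
  Complex.continuous_exp.comp (Complex.continuous_ofReal.mul continuous_const)

/-! ### Measure lemmas -/

lemma smul_prod_left (c : ENNReal) (hc : c ≠ ⊤) :
    ((c • (volume : Measure ℝ)).prod (volume : Measure ℝ)) = c • ((volume : Measure ℝ).prod volume) := by
  ext s hs
  rw [Measure.prod_apply hs, Measure.smul_apply, Measure.prod_apply hs, lintegral_smul_measure]

lemma smul_prod_right (c : ENNReal) (hc : c ≠ ⊤) (μ : Measure ℝ) [SFinite μ] :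
    (μ.prod (c • (volume : Measure ℝ))) = c • (μ.prod volume) := by
  ext s hs
  rw [Measure.prod_apply hs, Measure.smul_apply, Measure.prod_apply hs]
  simp only [Measure.smul_apply, smul_eq_mul]
  rw [lintegral_const_mul' c _ hc]

lemma map_affine_real (a k : ℝ) (hk : k ≠ 0) :
    Measure.map (fun t : ℝ => a + k * t) volume = ENNReal.ofReal |k⁻¹| • volume := by
  have h : (fun t : ℝ => a + k * t) = (fun t : ℝ => a + t) ∘ (fun t : ℝ => k * t) := rfl
  rw [h, ← Measure.map_map (by fun_prop) (by fun_prop), Real.map_volume_mul_left hk,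
    Measure.map_smul, (measurePreserving_add_left volume a).map_eq]

lemma map_diag (a b k l : ℝ) (hk : k ≠ 0) (hl : l ≠ 0) :
    Measure.map (fun w : ℝ × ℝ => (a + k * w.1, b + l * w.2)) (volume : Measure (ℝ × ℝ))
      = ENNReal.ofReal (|k⁻¹| * |l⁻¹|) • volume := by
  have h : (fun w : ℝ × ℝ => (a + k * w.1, b + l * w.2))
      = Prod.map (fun t : ℝ => a + k * t) (fun t : ℝ => b + l * t) := rfl
  rw [h, Measure.volume_eq_prod, ← Measure.map_prod_map _ _ (by fun_prop) (by fun_prop),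
    map_affine_real a k hk, map_affine_real b l hl,
    smul_prod_right _ ENNReal.ofReal_ne_top, smul_prod_left _ ENNReal.ofReal_ne_top,
    smul_smul, ← ENNReal.ofReal_mul (abs_nonneg _), mul_comm (|l⁻¹|) (|k⁻¹|), ← Measure.volume_eq_prod]

lemma map_swap_vol : Measure.map Prod.swap (volume : Measure (ℝ × ℝ)) = volume := by
  rw [Measure.volume_eq_prod]
  exact Measure.measurePreserving_swap.map_eq

lemma map_affine2 (a b k l : ℝ) (hk : k ≠ 0) (hl : l ≠ 0) :
    Measure.map (fun w : ℝ × ℝ => (a + k * w.2, b + l * w.1)) (volume : Measure (ℝ × ℝ))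
      = ENNReal.ofReal (|k⁻¹| * |l⁻¹|) • volume := by
  have h : (fun w : ℝ × ℝ => (a + k * w.2, b + l * w.1))
      = (fun w : ℝ × ℝ => (a + k * w.1, b + l * w.2)) ∘ Prod.swap := rfl
  rw [h, ← Measure.map_map (by fun_prop) measurable_swap, map_swap_vol, map_diag a b k l hk hl]

lemma aesm_map_affine2 {ϕ : ℝ × ℝ → ℂ} (hϕm : AEStronglyMeasurable ϕ volume)
    (a b k l : ℝ) (hk : k ≠ 0) (hl : l ≠ 0) :
    AEStronglyMeasurable ϕ (Measure.map (fun w : ℝ × ℝ => (a + k * w.2, b + l * w.1)) volume) := by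
  rw [map_affine2 a b k l hk hl]
  exact hϕm.mono_ac (Measure.smul_absolutelyContinuous)

lemma integral_affine2 {ϕ : ℝ × ℝ → ℂ} (hϕm : AEStronglyMeasurable ϕ volume)
    (a b k l : ℝ) (hk : k ≠ 0) (hl : l ≠ 0) :
    ∫ w : ℝ × ℝ, ϕ (a - k * w.2, b - l * w.1) = (|k⁻¹| * |l⁻¹|) • ∫ v : ℝ × ℝ, ϕ v := by
  have h : (fun w : ℝ × ℝ => ϕ (a - k * w.2, b - l * w.1))
      = fun w : ℝ × ℝ => ϕ (a + (-k) * w.2, b + (-l) * w.1) := by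
    funext w; ring_nf
  rw [h]
  have hA : Measurable (fun w : ℝ × ℝ => (a + (-k) * w.2, b + (-l) * w.1)) := by fun_prop
  have h1 := aesm_map_affine2 hϕm a b (-k) (-l) (neg_ne_zero.mpr hk) (neg_ne_zero.mpr hl)
  rw [← integral_map hA.aemeasurable h1, map_affine2 a b (-k) (-l) (neg_ne_zero.mpr hk)
    (neg_ne_zero.mpr hl), integral_smul_measure, ENNReal.toReal_ofReal (by positivity)]
  congr 1
  rw [inv_neg, abs_neg, inv_neg, abs_neg]

lemma integrable_affine2 {ϕ : ℝ × ℝ → ℂ} (hϕm : AEStronglyMeasurable ϕ volume)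
    (hϕ : Integrable ϕ volume) (a b k l : ℝ) (hk : k ≠ 0) (hl : l ≠ 0) :
    Integrable (fun w : ℝ × ℝ => ϕ (a - k * w.2, b - l * w.1)) volume := by
  have h : (fun w : ℝ × ℝ => ϕ (a - k * w.2, b - l * w.1))
      = ϕ ∘ (fun w : ℝ × ℝ => (a + (-k) * w.2, b + (-l) * w.1)) := by
    funext w; simp only [Function.comp_apply]; ring_nf
  rw [h]
  have hA : Measurable (fun w : ℝ × ℝ => (a + (-k) * w.2, b + (-l) * w.1)) := by fun_prop
  have h1 := aesm_map_affine2 hϕm a b (-k) (-l) (neg_ne_zero.mpr hk) (neg_ne_zero.mpr hl)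
  refine (integrable_map_measure h1 hA.aemeasurable).mp ?_
  rw [map_affine2 a b (-k) (-l) (neg_ne_zero.mpr hk) (neg_ne_zero.mpr hl)]
  refine (integrable_smul_measure ?_ ENNReal.ofReal_ne_top).mpr hϕ
  simp only [ne_eq, ENNReal.ofReal_eq_zero, not_le]
  exact mul_pos (abs_pos.mpr (inv_ne_zero (neg_ne_zero.mpr hk)))
    (abs_pos.mpr (inv_ne_zero (neg_ne_zero.mpr hl)))

/-! ### conjugate of a Schwartz map -/

noncomputable def conjSM (f : SchwartzMap V ℂ) : SchwartzMap V ℂ where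
  toFun := fun x => (starRingEnd ℂ) (f x)
  smooth' := by
    have h : (fun x => (starRingEnd ℂ) (f x)) = ⇑Complex.conjLIE ∘ ⇑f := rfl
    rw [h]
    exact Complex.conjLIE.toLinearIsometry.toContinuousLinearMap.contDiff.comp (f.smooth ⊤)
  decay' := by
    intro k n
    obtain ⟨C, hC⟩ := f.decay' k n
    refine ⟨C, fun x => ?_⟩
    have h : (fun x => (starRingEnd ℂ) (f x)) = ⇑Complex.conjLIE ∘ ⇑f := rfl
    rw [h, Complex.conjLIE.norm_iteratedFDeriv_comp_left]
    exact hC x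

/-! ### FT of a Schwartz function: rewriting, integrability, continuity -/

noncomputable def e : Euc ≃L[ℝ] V :=
  (EuclideanSpace.equiv (Fin 2) ℝ).trans (ContinuousLinearEquiv.finTwoArrow ℝ ℝ)

lemma e_apply (v : Euc) : e v = (v 0, v 1) := rfl

lemma e_mp : MeasurePreserving (⇑e) (volume : Measure Euc) (volume : Measure V) := by
  have h : ⇑e = (⇑(MeasurableEquiv.finTwoArrow (α := ℝ)) ∘ ⇑(MeasurableEquiv.toLp 2 (Fin 2 → ℝ)).symm) := by
    funext v
    rfl
  rw [h]
  exact (volume_preserving_finTwoArrow ℝ).comp (EuclideanSpace.volume_preserving_symm_measurableEquiv_toLp (Fin 2))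

lemma e_symm_mp : Measure.map (⇑e.symm) (volume : Measure V) = (volume : Measure Euc) := by
  have h0 : Measure.map (⇑e) (volume : Measure Euc) = volume := e_mp.map_eq
  calc Measure.map (⇑e.symm) (volume : Measure V)
      = Measure.map (⇑e.symm) (Measure.map (⇑e) volume) := by rw [h0]
    _ = Measure.map (⇑e.symm ∘ ⇑e) volume := Measure.map_map (by fun_prop) (by fun_prop)
    _ = Measure.map id volume := by
        congr 1
        funext v
        simp
    _ = volume := Measure.map_id

noncomputable def toEuc : SchwartzMap V ℂ →L[ℝ] SchwartzMap Euc ℂ :=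
  SchwartzMap.compCLM ℝ (g := ⇑e) (e.toContinuousLinearMap.hasTemperateGrowth)
    ⟨1, ‖(e.symm.toContinuousLinearMap : V →L[ℝ] Euc)‖, fun x => by
      have h1 : ‖x‖ = ‖e.symm.toContinuousLinearMap (e x)‖ := by simp
      rw [h1]
      calc ‖e.symm.toContinuousLinearMap (e x)‖
          ≤ ‖(e.symm.toContinuousLinearMap : V →L[ℝ] Euc)‖ * ‖e x‖ :=
            (e.symm.toContinuousLinearMap).le_opNorm _
        _ ≤ ‖(e.symm.toContinuousLinearMap : V →L[ℝ] Euc)‖ * (1 + ‖e x‖) ^ 1 := by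
            rw [pow_one]
            refine mul_le_mul_of_nonneg_left (by linarith [norm_nonneg (e x)]) (norm_nonneg _)⟩

lemma toEuc_apply (φ : SchwartzMap V ℂ) (v : Euc) : (toEuc φ) v = φ (e v) := rfl

noncomputable def Lam (hbar : ℝ) (w : V) : Euc :=
  e.symm (w.1 / (2 * π * hbar), -(w.2 / (2 * π * hbar)))

lemma Lam_continuous (hbar : ℝ) : Continuous (Lam hbar) := by
  unfold Lam
  fun_prop

lemma Lam_coord (hbar : ℝ) (w : V) :
    (Lam hbar w) 0 = w.1 / (2 * π * hbar) ∧ (Lam hbar w) 1 = -(w.2 / (2 * π * hbar)) := by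
  have h : e (Lam hbar w) = (w.1 / (2 * π * hbar), -(w.2 / (2 * π * hbar))) :=
    e.apply_symm_apply _
  rw [e_apply] at h
  exact ⟨congrArg Prod.fst h, congrArg Prod.snd h⟩

lemma FT_Ph (hbar : ℝ) (hh : hbar ≠ 0) (f : V → ℂ) (w : V) :
    FT hbar f w = (1 / (2 * π * hbar) : ℂ) *
      ∫ u : V, f u * Ph ((w.2 * u.2 - w.1 * u.1) / hbar) := by
  unfold FT Ph
  congr 1
  refine integral_congr_ae (Filter.Eventually.of_forall fun u => ?_)
  have hb : (hbar : ℂ) ≠ 0 := Complex.ofReal_ne_zero.mpr hh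
  have harg : -(Complex.I / (hbar : ℂ)) * ((w.1 : ℂ) * (u.1 : ℂ) - (w.2 : ℂ) * (u.2 : ℂ))
      = (((w.2 * u.2 - w.1 * u.1) / hbar : ℝ) : ℂ) * Complex.I := by
    push_cast
    field_simp
    ring
  simp only [harg]

lemma starProd_Ph (hbar σ : ℝ) (hh : hbar ≠ 0) (f g : V → ℂ) (z : V) :
    starProd hbar σ f g z = (1 / (2 * π * hbar) : ℂ) *
      ∫ w : V, FT hbar f w * g (z.1 - (1 - σ) * w.2, z.2 - σ * w.1) *
        Ph ((w.1 * z.1 - w.2 * z.2) / hbar) := by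
  unfold starProd Ph
  congr 1
  refine integral_congr_ae (Filter.Eventually.of_forall fun w => ?_)
  have hb : (hbar : ℂ) ≠ 0 := Complex.ofReal_ne_zero.mpr hh
  have harg : (Complex.I / (hbar : ℂ)) * ((w.1 : ℂ) * (z.1 : ℂ) - (w.2 : ℂ) * (z.2 : ℂ))
      = (((w.1 * z.1 - w.2 * z.2) / hbar : ℝ) : ℂ) * Complex.I := by
    push_cast
    field_simp
  simp only [harg]

lemma FT_fourier (hbar : ℝ) (hh : 0 < hbar) (φ : SchwartzMap V ℂ) (w : V) :
    FT hbar (⇑φ) w = (1 / (2 * π * hbar) : ℂ) *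
      (SchwartzMap.fourierTransformCLM ℂ (toEuc φ)) (Lam hbar w) := by
  rw [FT_Ph hbar hh.ne' (⇑φ) w]
  congr 1
  rw [SchwartzMap.fourierTransformCLM_apply, SchwartzMap.fourier_coe, Real.fourier_eq]
  have hemb : MeasurableEmbedding (⇑e) := e.toHomeomorph.measurableEmbedding
  have hπ : (π : ℝ) ≠ 0 := Real.pi_ne_zero
  have hb : hbar ≠ 0 := hh.ne'
  refine Eq.symm ?_
  calc ∫ v : Euc, (Real.fourierChar (-(inner ℝ v (Lam hbar w) : ℝ)) : Circle) • (toEuc φ) v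
      = ∫ v : Euc, (fun z : V => φ z * Ph ((w.2 * z.2 - w.1 * z.1) / hbar)) (e v) := by
        refine integral_congr_ae (Filter.Eventually.of_forall fun v => ?_)
        have hL0 := (Lam_coord hbar w).1
        have hL1 := (Lam_coord hbar w).2
        have hinner : (inner ℝ v (Lam hbar w) : ℝ)
            = (e v).1 * (w.1 / (2 * π * hbar)) + (e v).2 * (-(w.2 / (2 * π * hbar))) := by
          rw [PiLp.inner_apply, Fin.sum_univ_two, hL0, hL1, e_apply]
          simp [RCLike.inner_apply]
          ring
        simp only [toEuc_apply, Circle.smul_def, Real.fourierChar_apply, hinner]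
        have harg : 2 * π * (-((e v).1 * (w.1 / (2 * π * hbar)) +
            (e v).2 * (-(w.2 / (2 * π * hbar)))))
            = (w.2 * (e v).2 - w.1 * (e v).1) / hbar := by
          field_simp
          ring
        rw [harg]
        simp only [Ph]
        rw [smul_eq_mul, mul_comm]
    _ = ∫ z : V, φ z * Ph ((w.2 * z.2 - w.1 * z.1) / hbar) :=
        e_mp.integral_comp hemb (fun z : V => φ z * Ph ((w.2 * z.2 - w.1 * z.1) / hbar))

lemma FT_eq_fun (hbar : ℝ) (hh : 0 < hbar) (φ : SchwartzMap V ℂ) :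
    FT hbar (⇑φ) = fun w => (1 / (2 * π * hbar) : ℂ) *
      (SchwartzMap.fourierTransformCLM ℂ (toEuc φ)) (Lam hbar w) := by
  funext w
  exact FT_fourier hbar hh φ w

lemma FT_continuous (hbar : ℝ) (hh : 0 < hbar) (φ : SchwartzMap V ℂ) :
    Continuous (FT hbar (⇑φ)) := by
  rw [FT_eq_fun hbar hh φ]
  exact continuous_const.mul
    ((SchwartzMap.fourierTransformCLM ℂ (toEuc φ)).continuous.comp (Lam_continuous hbar))

lemma FT_integrable (hbar : ℝ) (hh : 0 < hbar) (φ : SchwartzMap V ℂ) :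
    Integrable (FT hbar (⇑φ)) volume := by
  rw [FT_eq_fun hbar hh φ]
  set G := SchwartzMap.fourierTransformCLM ℂ (toEuc φ) with hG
  refine Integrable.const_mul ?_ _
  -- Integrable (fun w => G (Lam hbar w))
  have h2πh : (2 * π * hbar) ≠ 0 := by positivity
  have hM : (fun w : V => ((w.1 / (2 * π * hbar), -(w.2 / (2 * π * hbar))) : V))
      = fun w : V => ((0 : ℝ) + (2 * π * hbar)⁻¹ * w.1, (0 : ℝ) + (-(2 * π * hbar)⁻¹) * w.2) := by
    funext w
    simp only [Prod.mk.injEq]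
    constructor <;> field_simp <;> ring
  have hLam : Lam hbar = (⇑e.symm) ∘
      (fun w : V => ((0 : ℝ) + (2 * π * hbar)⁻¹ * w.1, (0 : ℝ) + (-(2 * π * hbar)⁻¹) * w.2)) := by
    funext w
    simp only [Function.comp_apply, Lam]
    congr 1
    have := congrFun hM w
    simpa using this
  have hk0 : ((2 * π * hbar)⁻¹ : ℝ) ≠ 0 := inv_ne_zero h2πh
  have hl0 : (-(2 * π * hbar)⁻¹ : ℝ) ≠ 0 := neg_ne_zero.mpr hk0
  have hmapM := map_diag 0 0 ((2 * π * hbar)⁻¹) (-(2 * π * hbar)⁻¹) hk0 hl0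
  have hmapLam : Measure.map (Lam hbar) volume
      = ENNReal.ofReal (|((2 * π * hbar)⁻¹)⁻¹| * |(-(2 * π * hbar)⁻¹)⁻¹|) • volume := by
    rw [hLam, ← Measure.map_map (by fun_prop) (by fun_prop), hmapM, Measure.map_smul, e_symm_mp]
  have hGaesm : AEStronglyMeasurable (⇑G) (Measure.map (Lam hbar) volume) := by
    rw [hmapLam]
    exact G.continuous.aestronglyMeasurable.mono_ac Measure.smul_absolutelyContinuous
  have hLamMeas : Measurable (Lam hbar) := (Lam_continuous hbar).measurable
  have := (integrable_map_measure hGaesm hLamMeas.aemeasurable).mp ?_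
  · exact this
  · rw [hmapLam]
    refine (integrable_smul_measure ?_ ENNReal.ofReal_ne_top).mpr G.integrable
    simp only [ne_eq, ENNReal.ofReal_eq_zero, not_le]
    exact mul_pos (abs_pos.mpr (inv_ne_zero hk0)) (abs_pos.mpr (inv_ne_zero hl0))

/-! ### bounds -/

lemma schwartz_bound (φ : SchwartzMap V ℂ) : ∃ C : ℝ, 0 ≤ C ∧ ∀ x, ‖φ x‖ ≤ C := by
  obtain ⟨C, hC0, hC⟩ := φ.decay 0 0
  refine ⟨C, le_of_lt hC0, fun x => ?_⟩
  have := hC x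
  simpa [norm_iteratedFDeriv_zero] using this

/-! ### algebraic expansion of starProd into a double integral -/

lemma conj_c (hbar : ℝ) :
    (starRingEnd ℂ) ((1 : ℂ) / (2 * (π : ℂ) * (hbar : ℂ))) = 1 / (2 * (π : ℂ) * (hbar : ℂ)) := by
  simp [map_div₀, Complex.conj_ofReal, map_ofNat]

lemma conj_FT (hbar : ℝ) (hh : hbar ≠ 0) (f : V → ℂ) (w : V) :
    (starRingEnd ℂ) (FT hbar f w) = (1 / (2 * π * hbar) : ℂ) *
      ∫ u : V, (starRingEnd ℂ) (f u) * Ph ((w.1 * u.1 - w.2 * u.2) / hbar) := by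
  rw [FT_Ph hbar hh f w, map_mul, conj_c, ← integral_conj]
  congr 1
  refine integral_congr_ae (Filter.Eventually.of_forall fun u => ?_)
  simp only [map_mul, Ph_conj, ← neg_div, neg_sub]

/-- Expansion of `starProd` as a double integral (purely algebraic, no integrability needed). -/
lemma expandR (hbar τ : ℝ) (hh : hbar ≠ 0) (f h : V → ℂ) (z : V) :
    starProd hbar τ f h z = (1 / (2 * π * hbar) : ℂ) * ((1 / (2 * π * hbar) : ℂ) *
      ∫ w : V, ∫ u : V, f u * h (z.1 - (1 - τ) * w.2, z.2 - τ * w.1) *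
        Ph ((w.1 * z.1 - w.2 * z.2 - (w.1 * u.1 - w.2 * u.2)) / hbar)) := by
  rw [starProd_Ph hbar τ hh f h z]
  congr 1
  rw [← integral_const_mul]
  refine integral_congr_ae (Filter.Eventually.of_forall fun w => ?_)
  beta_reduce
  rw [FT_Ph hbar hh f w]
  rw [mul_assoc, mul_assoc]
  congr 1
  rw [mul_comm (∫ u : V, f u * Ph ((w.2 * u.2 - w.1 * u.1) / hbar))
    (h (z.1 - (1 - τ) * w.2, z.2 - τ * w.1) * Ph ((w.1 * z.1 - w.2 * z.2) / hbar)),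
    ← integral_const_mul]
  refine integral_congr_ae (Filter.Eventually.of_forall fun u => ?_)
  calc h (z.1 - (1 - τ) * w.2, z.2 - τ * w.1) * Ph ((w.1 * z.1 - w.2 * z.2) / hbar) *
        (f u * Ph ((w.2 * u.2 - w.1 * u.1) / hbar))
      = f u * h (z.1 - (1 - τ) * w.2, z.2 - τ * w.1) *
        (Ph ((w.1 * z.1 - w.2 * z.2) / hbar) * Ph ((w.2 * u.2 - w.1 * u.1) / hbar)) := by ring
    _ = f u * h (z.1 - (1 - τ) * w.2, z.2 - τ * w.1) *
        Ph ((w.1 * z.1 - w.2 * z.2 - (w.1 * u.1 - w.2 * u.2)) / hbar) := by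
        rw [Ph_add, show (w.1 * z.1 - w.2 * z.2) / hbar + (w.2 * u.2 - w.1 * u.1) / hbar
          = (w.1 * z.1 - w.2 * z.2 - (w.1 * u.1 - w.2 * u.2)) / hbar by ring]

/-- Expansion of the conjugate of `starProd`. -/
lemma expandL (hbar σ : ℝ) (hh : hbar ≠ 0) (f g : V → ℂ) (z : V) :
    (starRingEnd ℂ) (starProd hbar σ f g z) = (1 / (2 * π * hbar) : ℂ) *
      ((1 / (2 * π * hbar) : ℂ) *
      ∫ w : V, ∫ u : V, (starRingEnd ℂ) (f u) *
        (starRingEnd ℂ) (g (z.1 - (1 - σ) * w.2, z.2 - σ * w.1)) *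
        Ph ((w.1 * u.1 - w.2 * u.2 - (w.1 * z.1 - w.2 * z.2)) / hbar)) := by
  rw [starProd_Ph hbar σ hh f g z, map_mul, conj_c, ← integral_conj]
  congr 1
  rw [← integral_const_mul]
  refine integral_congr_ae (Filter.Eventually.of_forall fun w => ?_)
  beta_reduce
  rw [map_mul, map_mul, Ph_conj, conj_FT hbar hh f w]
  rw [mul_assoc, mul_assoc]
  congr 1
  rw [mul_comm (∫ u : V, (starRingEnd ℂ) (f u) * Ph ((w.1 * u.1 - w.2 * u.2) / hbar))
    ((starRingEnd ℂ) (g (z.1 - (1 - σ) * w.2, z.2 - σ * w.1)) *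
      Ph (-((w.1 * z.1 - w.2 * z.2) / hbar))), ← integral_const_mul]
  refine integral_congr_ae (Filter.Eventually.of_forall fun u => ?_)
  calc (starRingEnd ℂ) (g (z.1 - (1 - σ) * w.2, z.2 - σ * w.1)) *
        Ph (-((w.1 * z.1 - w.2 * z.2) / hbar)) *
        ((starRingEnd ℂ) (f u) * Ph ((w.1 * u.1 - w.2 * u.2) / hbar))
      = (starRingEnd ℂ) (f u) * (starRingEnd ℂ) (g (z.1 - (1 - σ) * w.2, z.2 - σ * w.1)) *
        (Ph (-((w.1 * z.1 - w.2 * z.2) / hbar)) * Ph ((w.1 * u.1 - w.2 * u.2) / hbar)) := by ring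
    _ = (starRingEnd ℂ) (f u) * (starRingEnd ℂ) (g (z.1 - (1 - σ) * w.2, z.2 - σ * w.1)) *
        Ph ((w.1 * u.1 - w.2 * u.2 - (w.1 * z.1 - w.2 * z.2)) / hbar) := by
        rw [Ph_add, show -((w.1 * z.1 - w.2 * z.2) / hbar) + (w.1 * u.1 - w.2 * u.2) / hbar
          = (w.1 * u.1 - w.2 * u.2 - (w.1 * z.1 - w.2 * z.2)) / hbar by ring]

/-! ### the double integrands -/

noncomputable def Ffun (hbar σ : ℝ) (φ ψ : V → ℂ) (z : V) : V → V → ℂ := fun w u =>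
  φ u * ψ (z.1 - (1 - σ) * w.2, z.2 - σ * w.1) *
    Ph ((w.1 * u.1 - w.2 * u.2 - (w.1 * z.1 - w.2 * z.2)) / hbar)

noncomputable def Gfun (hbar σ : ℝ) (φ ψ : V → ℂ) (z : V) : V → V → ℂ := fun w u =>
  ψ u * φ (z.1 - σ * w.2, z.2 - (1 - σ) * w.1) *
    Ph ((w.1 * z.1 - w.2 * z.2 - (w.1 * u.1 - w.2 * u.2)) / hbar)

noncomputable def Theta (hbar σ : ℝ) (φ ψ : V → ℂ) (z : V) : V → ℂ := fun w =>
  ∫ u : V, Gfun hbar σ φ ψ z w u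

lemma Gfun_continuous (hbar σ : ℝ) (φ ψ : SchwartzMap V ℂ) (z : V) (a : V) :
    Continuous (Gfun hbar σ (⇑φ) (⇑ψ) z a) := by
  unfold Gfun
  exact (ψ.continuous.mul continuous_const).mul (Ph_continuous.comp (by fun_prop))

lemma Theta_continuous (hbar σ : ℝ) (φ ψ : SchwartzMap V ℂ) (z : V) :
    Continuous (Theta hbar σ (⇑φ) (⇑ψ) z) := by
  obtain ⟨C, hC0, hC⟩ := schwartz_bound φ
  unfold Theta
  apply continuous_of_dominated (bound := fun u : V => ‖ψ u‖ * C)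
  · intro w
    exact (Gfun_continuous hbar σ φ ψ z w).aestronglyMeasurable
  · intro w
    refine Filter.Eventually.of_forall fun u => ?_
    unfold Gfun
    rw [norm_mul, norm_mul, Ph_norm, mul_one]
    exact mul_le_mul_of_nonneg_left (hC _) (norm_nonneg _)
  · exact (ψ.integrable.norm).mul_const C
  · refine Filter.Eventually.of_forall fun u => ?_
    unfold Gfun
    exact (continuous_const.mul (φ.continuous.comp (by fun_prop))).mul
      (Ph_continuous.comp (by fun_prop))

lemma Ffun_uncurry_continuous (hbar σ : ℝ) (φ ψ : SchwartzMap V ℂ) (z : V) :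
    Continuous (Function.uncurry (Ffun hbar σ (⇑φ) (⇑ψ) z)) := by
  unfold Function.uncurry Ffun
  exact ((φ.continuous.comp continuous_snd).mul (ψ.continuous.comp (by fun_prop))).mul
    (Ph_continuous.comp (by fun_prop))

lemma Ffun_integrable (hbar σ : ℝ) (hσ0 : σ ≠ 0) (hσ1' : (1:ℝ) - σ ≠ 0)
    (φ ψ : SchwartzMap V ℂ) (z : V) :
    Integrable (Function.uncurry (Ffun hbar σ (⇑φ) (⇑ψ) z))
      ((volume : Measure V).prod (volume : Measure V)) := by
  have hψM : Integrable (fun w : V => (ψ : V → ℂ) (z.1 - (1 - σ) * w.2, z.2 - σ * w.1)) volume :=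
    integrable_affine2 ψ.continuous.aestronglyMeasurable ψ.integrable z.1 z.2 (1 - σ) σ hσ1' hσ0
  have hbnd : Integrable
      (fun p : V × V => ‖(ψ : V → ℂ) (z.1 - (1 - σ) * p.1.2, z.2 - σ * p.1.1)‖ * ‖φ p.2‖)
      ((volume : Measure V).prod (volume : Measure V)) :=
    hψM.norm.mul_prod φ.integrable.norm
  refine hbnd.mono' (Ffun_uncurry_continuous hbar σ φ ψ z).aestronglyMeasurable ?_
  refine Filter.Eventually.of_forall fun p => ?_
  unfold Function.uncurry Ffun
  rw [norm_mul, norm_mul, Ph_norm, mul_one]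
  exact le_of_eq (mul_comm _ _)

lemma core (hbar : ℝ) (hh : 0 < hbar) (σ : ℝ) (hσ0 : σ ≠ 0) (hσ1 : σ ≠ 1)
    (φ ψ : SchwartzMap V ℂ) (z : V) :
    ∫ w : V, ∫ u : V, Ffun hbar σ (⇑φ) (⇑ψ) z w u
      = ∫ w : V, ∫ u : V, Gfun hbar σ (⇑φ) (⇑ψ) z w u := by
  have hb : hbar ≠ 0 := hh.ne'
  have hσ1' : (1:ℝ) - σ ≠ 0 := sub_ne_zero.mpr (Ne.symm hσ1)
  -- pointwise identification
  have hFG : ∀ w u : V, Ffun hbar σ (⇑φ) (⇑ψ) z w u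
      = Gfun hbar σ (⇑φ) (⇑ψ) z ((z.2 - u.2) / (1 - σ), (z.1 - u.1) / σ)
          (z.1 - (1 - σ) * w.2, z.2 - σ * w.1) := by
    intro w u
    unfold Ffun Gfun
    dsimp only
    rw [show (z.1 - σ * ((z.1 - u.1) / σ), z.2 - (1 - σ) * ((z.2 - u.2) / (1 - σ))) = u by
      rw [show z.1 - σ * ((z.1 - u.1) / σ) = u.1 by field_simp; ring,
        show z.2 - (1 - σ) * ((z.2 - u.2) / (1 - σ)) = u.2 by field_simp; ring, Prod.mk.eta]]
    rw [mul_comm ((ψ : V → ℂ) _) ((φ : V → ℂ) u)]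
    congr 1
    congr 1
    field_simp
    ring
  have hstep1 : ∀ u : V, (∫ w : V, Ffun hbar σ (⇑φ) (⇑ψ) z w u)
      = (|(1 - σ)⁻¹| * |σ⁻¹|) •
          ∫ v : V, Gfun hbar σ (⇑φ) (⇑ψ) z ((z.2 - u.2) / (1 - σ), (z.1 - u.1) / σ) v := by
    intro u
    have h1 : (fun w : V => Ffun hbar σ (⇑φ) (⇑ψ) z w u)
        = fun w : V => Gfun hbar σ (⇑φ) (⇑ψ) z ((z.2 - u.2) / (1 - σ), (z.1 - u.1) / σ)
            (z.1 - (1 - σ) * w.2, z.2 - σ * w.1) := by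
      funext w
      exact hFG w u
    rw [h1]
    exact integral_affine2 (Gfun_continuous hbar σ φ ψ z _).aestronglyMeasurable
      z.1 z.2 (1 - σ) σ hσ1' hσ0
  have hΘm : AEStronglyMeasurable (Theta hbar σ (⇑φ) (⇑ψ) z) volume :=
    (Theta_continuous hbar σ φ ψ z).aestronglyMeasurable
  have h1σ : (1 : ℝ) / (1 - σ) ≠ 0 := one_div_ne_zero hσ1'
  have h1s : (1 : ℝ) / σ ≠ 0 := one_div_ne_zero hσ0
  calc ∫ w : V, ∫ u : V, Ffun hbar σ (⇑φ) (⇑ψ) z w u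
      = ∫ u : V, ∫ w : V, Ffun hbar σ (⇑φ) (⇑ψ) z w u :=
        integral_integral_swap (Ffun_integrable hbar σ hσ0 hσ1' φ ψ z)
    _ = ∫ u : V, (|(1 - σ)⁻¹| * |σ⁻¹|) •
          Theta hbar σ (⇑φ) (⇑ψ) z ((z.2 - u.2) / (1 - σ), (z.1 - u.1) / σ) := by
        refine integral_congr_ae (Filter.Eventually.of_forall fun u => ?_)
        beta_reduce
        exact hstep1 u
    _ = (|(1 - σ)⁻¹| * |σ⁻¹|) • ∫ u : V,
          Theta hbar σ (⇑φ) (⇑ψ) z ((z.2 - u.2) / (1 - σ), (z.1 - u.1) / σ) :=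
        integral_smul _ _
    _ = (|(1 - σ)⁻¹| * |σ⁻¹|) • ∫ u : V,
          Theta hbar σ (⇑φ) (⇑ψ) z (z.2 / (1 - σ) - 1 / (1 - σ) * u.2, z.1 / σ - 1 / σ * u.1) := by
        congr 1
        refine integral_congr_ae (Filter.Eventually.of_forall fun u => ?_)
        beta_reduce
        rw [show ((z.2 - u.2) / (1 - σ), (z.1 - u.1) / σ)
            = (z.2 / (1 - σ) - 1 / (1 - σ) * u.2, z.1 / σ - 1 / σ * u.1) by
          rw [show (z.2 - u.2) / (1 - σ) = z.2 / (1 - σ) - 1 / (1 - σ) * u.2 by field_simp,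
            show (z.1 - u.1) / σ = z.1 / σ - 1 / σ * u.1 by field_simp]]
    _ = (|(1 - σ)⁻¹| * |σ⁻¹|) • ((|(1 / (1 - σ))⁻¹| * |(1 / σ)⁻¹|) •
          ∫ v : V, Theta hbar σ (⇑φ) (⇑ψ) z v) := by
        rw [integral_affine2 hΘm (z.2 / (1 - σ)) (z.1 / σ) (1 / (1 - σ)) (1 / σ) h1σ h1s]
    _ = ∫ v : V, Theta hbar σ (⇑φ) (⇑ψ) z v := by
        rw [smul_smul, show (|(1 - σ)⁻¹| * |σ⁻¹|) * (|(1 / (1 - σ))⁻¹| * |(1 / σ)⁻¹|) = 1 by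
          rw [one_div, one_div, inv_inv, inv_inv, abs_inv, abs_inv]
          field_simp, one_smul]
    _ = ∫ w : V, ∫ u : V, Gfun hbar σ (⇑φ) (⇑ψ) z w u := rfl

lemma key (hbar : ℝ) (hh : 0 < hbar) (σ : ℝ) (hσ0 : σ ≠ 0) (hσ1 : σ ≠ 1)
    (f g : SchwartzMap V ℂ) (z : V) :
    (starRingEnd ℂ) (starProd hbar σ (⇑f) (⇑g) z) =
      starProd hbar (1 - σ) (fun w => (starRingEnd ℂ) (g w)) (fun w => (starRingEnd ℂ) (f w)) z := by
  have hb : hbar ≠ 0 := hh.ne'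
  rw [expandL hbar σ hb (⇑f) (⇑g) z,
    expandR hbar (1 - σ) hb (fun w => (starRingEnd ℂ) (g w)) (fun w => (starRingEnd ℂ) (f w)) z]
  have hss : (1 : ℝ) - (1 - σ) = σ := by ring
  simp only [hss]
  congr 2
  exact core hbar hh σ hσ0 hσ1 (conjSM f) (conjSM g) z

lemma cont_starProd (hbar : ℝ) (hh : 0 < hbar) (f h : V → ℂ)
    (hFi : Integrable (FT hbar f) volume) (hFc : Continuous (FT hbar f))
    (hhc : Continuous h) (C : ℝ) (hC0 : 0 ≤ C) (hCb : ∀ x, ‖h x‖ ≤ C) (z : V) :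
    Continuous fun σ : ℝ => starProd hbar σ f h z := by
  have hrw : (fun σ : ℝ => starProd hbar σ f h z) = fun σ : ℝ =>
      (1 / (2 * π * hbar) : ℂ) *
        ∫ w : V, FT hbar f w * h (z.1 - (1 - σ) * w.2, z.2 - σ * w.1) *
          Ph ((w.1 * z.1 - w.2 * z.2) / hbar) := by
    funext σ
    exact starProd_Ph hbar σ hh.ne' f h z
  rw [hrw]
  refine continuous_const.mul ?_
  apply continuous_of_dominated (bound := fun w : V => ‖FT hbar f w‖ * C)
  · intro σ
    exact ((hFc.mul (hhc.comp (by fun_prop))).mul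
      (Ph_continuous.comp (by fun_prop))).aestronglyMeasurable
  · intro σ
    refine Filter.Eventually.of_forall fun w => ?_
    rw [norm_mul, norm_mul, Ph_norm, mul_one]
    exact mul_le_mul_of_nonneg_left (hCb _) (norm_nonneg _)
  · exact hFi.norm.mul_const C
  · refine Filter.Eventually.of_forall fun w => ?_
    exact (continuous_const.mul (hhc.comp (by fun_prop))).mul continuous_const

end StarProdAux

/-- `(f ⋆_σ g)* = g* ⋆_{1−σ} f*`; in particular for the Moyal product `(f ⋆ g)* = g* ⋆ f*`. -/
theorem stmt_4 (hbar σ : ℝ) (hh : 0 < hbar) (f g : SchwartzMap (ℝ × ℝ) ℂ) :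
    (∀ z : ℝ × ℝ, (starRingEnd ℂ) (starProd hbar σ (⇑f) (⇑g) z) =
        starProd hbar (1 - σ) (fun w => (starRingEnd ℂ) (g w)) (fun w => (starRingEnd ℂ) (f w)) z) ∧
      (σ = 1/2 → ∀ z : ℝ × ℝ, (starRingEnd ℂ) (starProd hbar (1/2) (⇑f) (⇑g) z) =
        starProd hbar (1/2) (fun w => (starRingEnd ℂ) (g w)) (fun w => (starRingEnd ℂ) (f w)) z) := by
  have hmain : ∀ s : ℝ, ∀ z : ℝ × ℝ, (starRingEnd ℂ) (starProd hbar s (⇑f) (⇑g) z) =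
      starProd hbar (1 - s) (fun w => (starRingEnd ℂ) (g w)) (fun w => (starRingEnd ℂ) (f w)) z := by
    intro s z
    obtain ⟨Cg, hCg0, hCg⟩ := StarProdAux.schwartz_bound g
    obtain ⟨Cf, hCf0, hCf⟩ := StarProdAux.schwartz_bound (StarProdAux.conjSM f)
    have hL : Continuous fun t : ℝ => (starRingEnd ℂ) (starProd hbar t (⇑f) (⇑g) z) :=
      Complex.continuous_conj.comp
        (StarProdAux.cont_starProd hbar hh (⇑f) (⇑g) (StarProdAux.FT_integrable hbar hh f) (StarProdAux.FT_continuous hbar hh f)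
          g.continuous Cg hCg0 hCg z)
    have hR : Continuous fun t : ℝ =>
        starProd hbar (1 - t) (fun w => (starRingEnd ℂ) (g w)) (fun w => (starRingEnd ℂ) (f w)) z := by
      have h1 : Continuous fun t : ℝ =>
          starProd hbar t (fun w => (starRingEnd ℂ) (g w)) (fun w => (starRingEnd ℂ) (f w)) z :=
        StarProdAux.cont_starProd hbar hh _ _ (StarProdAux.FT_integrable hbar hh (StarProdAux.conjSM g)) (StarProdAux.FT_continuous hbar hh (StarProdAux.conjSM g))
          ((StarProdAux.conjSM f).continuous) Cf hCf0 hCf z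
      exact h1.comp (continuous_const.sub continuous_id)
    have heq : Set.EqOn (fun t : ℝ => (starRingEnd ℂ) (starProd hbar t (⇑f) (⇑g) z))
        (fun t : ℝ => starProd hbar (1 - t) (fun w => (starRingEnd ℂ) (g w))
          (fun w => (starRingEnd ℂ) (f w)) z) (({0, 1} : Set ℝ)ᶜ) := by
      intro t ht
      simp only [Set.mem_compl_iff, Set.mem_insert_iff, Set.mem_singleton_iff, not_or] at ht
      exact StarProdAux.key hbar hh t ht.1 ht.2 f g z
    have hdense : Dense (({0, 1} : Set ℝ)ᶜ) := Set.Countable.dense_compl ℝ (Set.to_countable _)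
    have hclos := heq.closure hL hR
    exact hclos (by rw [hdense.closure_eq]; exact Set.mem_univ s)
  refine ⟨hmain σ, fun _ z => ?_⟩
  have h2 := hmain (1/2) z
  rw [show (1 : ℝ) - 1/2 = 1/2 by norm_num] at h2
  exact h2
end

section
/- For Schwartz functions Ψ, Φ on ℝ², the L²-norm of the σ-star product satisfies ‖Ψ ⋆_σ Φ‖_{L²} ≤ (1/(2πħ)) ‖FΨ‖_{L¹} ‖Φ‖_{L²}, where F is the (ħ-normalized) Fourier transform. -/
open MeasureTheory Complex Real
open scoped FourierTransform ENNReal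

lemma FT_eq (hbar : ℝ) (hh : 0 < hbar) (Ψ : SchwartzMap (ℝ × ℝ) ℂ) :
    ∃ F : SchwartzMap (ℝ × ℝ) ℂ, FT hbar (⇑Ψ) = ⇑F := by
  have hπ := Real.pi_pos
  set a : ℝ := (2 * π * hbar)⁻¹ with ha_def
  have ha' : a ≠ 0 := by positivity
  let L : (ℝ × ℝ) ≃L[ℝ] ℂ :=
    (((LinearEquiv.smulOfNeZero ℝ ℝ a ha').prodCongr
        (LinearEquiv.smulOfNeZero ℝ ℝ (-a) (neg_ne_zero.mpr ha'))).trans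
      Complex.equivRealProdLm.symm).toContinuousLinearEquiv
  have hLre : ∀ w : ℝ × ℝ, (L w).re = a * w.1 := by
    intro w; simp [L, Complex.equivRealProdLm, smul_eq_mul]
  have hLim : ∀ w : ℝ × ℝ, (L w).im = -a * w.2 := by
    intro w; simp [L, Complex.equivRealProdLm, smul_eq_mul]
  let g : SchwartzMap ℂ ℂ :=
    SchwartzMap.compCLMOfContinuousLinearEquiv ℝ Complex.equivRealProdCLM Ψ
  refine ⟨(1 / (2 * π * hbar) : ℂ) •
    SchwartzMap.compCLMOfContinuousLinearEquiv ℝ L (SchwartzMap.fourierTransformCLM ℂ g), ?_⟩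
  funext w
  have hmp := Complex.volume_preserving_equiv_real_prod.symm
  have hcomp :
      𝓕 (⇑g) (L w) = ∫ z : ℝ × ℝ,
        Complex.exp ((↑(-2 * π * (inner ℝ (Complex.measurableEquivRealProd.symm z) (L w) : ℝ)) *
          Complex.I)) • g (Complex.measurableEquivRealProd.symm z) := by
    rw [Real.fourier_eq']
    rw [← MeasurePreserving.integral_comp hmp
      Complex.measurableEquivRealProd.symm.measurableEmbedding]
  have hg : ∀ z : ℝ × ℝ, g (Complex.measurableEquivRealProd.symm z) = Ψ z := fun z => rfl
  have hinner : ∀ z : ℝ × ℝ,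
      (inner ℝ (Complex.measurableEquivRealProd.symm z) (L w) : ℝ) =
        a * (w.1 * z.1 - w.2 * z.2) := by
    intro z
    rw [Complex.inner]
    simp [Complex.mul_re, hLre, hLim]
    ring
  simp only [FT, SchwartzMap.smul_apply, SchwartzMap.compCLMOfContinuousLinearEquiv_apply,
    Function.comp_apply, SchwartzMap.fourierTransformCLM_apply, smul_eq_mul]
  rw [SchwartzMap.fourier_coe, hcomp]
  congr 1
  refine integral_congr_ae (Filter.Eventually.of_forall fun z => ?_)
  simp only []
  rw [hg z, hinner z, smul_eq_mul, mul_comm]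
  congr 1
  have h1 : (hbar : ℂ) ≠ 0 := Complex.ofReal_ne_zero.mpr hh.ne'
  have h2 : (π : ℂ) ≠ 0 := Complex.ofReal_ne_zero.mpr hπ.ne'
  rw [ha_def]
  push_cast
  rw [div_eq_mul_inv, mul_inv (2 * (π:ℂ)) (hbar:ℂ), mul_inv (2:ℂ) (π:ℂ)]
  field_simp

/-- `‖Ψ ⋆_σ Φ‖_{L²} ≤ (1/(2πħ)) ‖FΨ‖_{L¹} ‖Φ‖_{L²}` for Schwartz functions on `ℝ²`. -/
theorem stmt_7 (hbar σ : ℝ) (hh : 0 < hbar) (Ψ Φ : SchwartzMap (ℝ × ℝ) ℂ) :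
    Real.sqrt (∫ z : ℝ × ℝ, ‖starProd hbar σ (⇑Ψ) (⇑Φ) z‖ ^ 2) ≤
      (1 / (2 * π * hbar)) * (∫ w : ℝ × ℝ, ‖FT hbar (⇑Ψ) w‖) *
        Real.sqrt (∫ z : ℝ × ℝ, ‖Φ z‖ ^ 2) := by
  obtain ⟨F, hF⟩ := FT_eq hbar hh Ψ
  have hπ := Real.pi_pos
  have hcpos : (0:ℝ) < 1 / (2 * π * hbar) := by positivity
  set c : ℝ := 1 / (2 * π * hbar) with hc
  set C : ℝ≥0∞ := ENNReal.ofReal c with hC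
  have hCne : C ≠ ⊤ := ENNReal.ofReal_ne_top
  set A : ℝ≥0∞ := ∫⁻ w : ℝ × ℝ, (‖F w‖₊ : ℝ≥0∞) with hA
  set B : ℝ≥0∞ := ∫⁻ z : ℝ × ℝ, (‖Φ z‖₊ : ℝ≥0∞) ^ 2 with hB
  have hAfin : A ≠ ⊤ := F.integrable.2.ne
  set M : ℝ := SchwartzMap.seminorm ℝ 0 0 Φ with hMdef
  have hM : ∀ x, ‖Φ x‖ ≤ M := SchwartzMap.norm_le_seminorm ℝ Φ
  have hM0 : 0 ≤ M := le_trans (norm_nonneg _) (hM 0)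
  have hnn_le : ∀ x : ℝ × ℝ, (‖Φ x‖₊ : ℝ≥0∞) ≤ ENNReal.ofReal M := by
    intro x
    rw [← (ofReal_norm _).trans (enorm_eq_nnnorm _)]
    exact ENNReal.ofReal_le_ofReal (hM x)
  have hBfin : B ≠ ⊤ := by
    have hle : B ≤ ENNReal.ofReal M * ∫⁻ z : ℝ × ℝ, (‖Φ z‖₊ : ℝ≥0∞) := by
      rw [← lintegral_const_mul' _ _ ENNReal.ofReal_ne_top]
      refine lintegral_mono fun z => ?_
      rw [pow_two]
      exact mul_le_mul_left (hnn_le z) _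
    exact ne_top_of_le_ne_top
      (ENNReal.mul_ne_top ENNReal.ofReal_ne_top Φ.integrable.2.ne) hle
  -- purely imaginary exponents have unit modulus
  have hre : ∀ x y u v : ℝ,
      ((Complex.I / (hbar : ℂ)) * ((x : ℂ) * (y : ℂ) - (u : ℂ) * (v : ℂ))).re = 0 := by
    intro x y u v
    simp [Complex.div_re, Complex.mul_re, Complex.mul_im]
  have hexp : ∀ ζ : ℂ, ζ.re = 0 → ‖Complex.exp ζ‖ = 1 := by
    intro ζ hζ
    rw [Complex.norm_exp, hζ, Real.exp_zero]
  have hconst : ((‖(1 / (2 * (π:ℂ) * (hbar:ℂ)) : ℂ)‖₊ : ℝ≥0∞)) = C := by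
    rw [← (ofReal_norm _).trans (enorm_eq_nnnorm _)]
    congr 1
    have h2 : (1 / (2 * (π:ℂ) * (hbar:ℂ)) : ℂ) = ((1 / (2*π*hbar) : ℝ) : ℂ) := by
      push_cast; ring
    rw [h2, Complex.norm_real, Real.norm_eq_abs, abs_of_pos hcpos]
  have hA1 : ∀ z : ℝ × ℝ, (‖starProd hbar σ (⇑Ψ) (⇑Φ) z‖₊ : ℝ≥0∞) ≤
      C * ∫⁻ w : ℝ × ℝ, (‖F w‖₊ : ℝ≥0∞) *
        (‖Φ (z.1 - (1-σ)*w.2, z.2 - σ*w.1)‖₊ : ℝ≥0∞) := by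
    intro z
    have h0 : starProd hbar σ (⇑Ψ) (⇑Φ) z = (1 / (2 * (π:ℂ) * (hbar:ℂ))) *
        ∫ w : ℝ × ℝ, F w * Φ (z.1 - (1-σ)*w.2, z.2 - σ*w.1) *
          Complex.exp ((Complex.I/(hbar:ℂ)) * (w.1*z.1 - w.2*z.2)) := by
      simp only [starProd, hF]
    rw [h0, nnnorm_mul, ENNReal.coe_mul, hconst]
    refine mul_le_mul_right ?_ C
    refine le_trans (enorm_integral_le_lintegral_enorm _) (lintegral_mono fun w => ?_)
    rw [enorm_eq_nnnorm, nnnorm_mul, nnnorm_mul, ENNReal.coe_mul, ENNReal.coe_mul]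
    have h1 : ‖Complex.exp ((Complex.I/(hbar:ℂ)) *
        ((w.1:ℂ)*(z.1:ℂ) - (w.2:ℂ)*(z.2:ℂ)))‖₊ = 1 :=
      NNReal.eq (hexp _ (hre w.1 z.1 w.2 z.2))
    rw [h1, ENNReal.coe_one, mul_one]
  have hrpow_half : ∀ x : ℝ≥0∞, x ^ ((1:ℝ)/2) * x ^ ((1:ℝ)/2) = x := by
    intro x
    rw [← ENNReal.rpow_add_of_nonneg _ _ (by norm_num) (by norm_num)]
    norm_num
  have hrpow_sq : ∀ x : ℝ≥0∞, (x ^ ((1:ℝ)/2)) ^ (2:ℝ) = x := by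
    intro x
    rw [← ENNReal.rpow_mul]
    norm_num
  have hCS : ∀ z : ℝ × ℝ,
      (∫⁻ w : ℝ × ℝ, (‖F w‖₊ : ℝ≥0∞) *
        (‖Φ (z.1 - (1-σ)*w.2, z.2 - σ*w.1)‖₊ : ℝ≥0∞)) ^ 2 ≤
      A * ∫⁻ w : ℝ × ℝ, (‖F w‖₊ : ℝ≥0∞) *
        (‖Φ (z.1 - (1-σ)*w.2, z.2 - σ*w.1)‖₊ : ℝ≥0∞) ^ 2 := by
    intro z
    have hpq : Real.HolderConjugate 2 2 := Real.HolderConjugate.two_two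
    have hFm : Measurable fun w : ℝ × ℝ => (‖F w‖₊ : ℝ≥0∞) :=
      F.continuous.measurable.nnnorm.coe_nnreal_ennreal
    have hΦm : Measurable fun w : ℝ × ℝ =>
        (‖Φ (z.1 - (1-σ)*w.2, z.2 - σ*w.1)‖₊ : ℝ≥0∞) := by
      apply Measurable.coe_nnreal_ennreal
      apply Measurable.nnnorm
      exact (Φ.continuous.comp (by fun_prop)).measurable
    have hf : AEMeasurable (fun w : ℝ × ℝ => (‖F w‖₊ : ℝ≥0∞) ^ ((1:ℝ)/2)) volume :=
      (hFm.pow_const _).aemeasurable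
    have hg : AEMeasurable (fun w : ℝ × ℝ => (‖F w‖₊ : ℝ≥0∞) ^ ((1:ℝ)/2) *
        (‖Φ (z.1 - (1-σ)*w.2, z.2 - σ*w.1)‖₊ : ℝ≥0∞)) volume :=
      ((hFm.pow_const _).mul hΦm).aemeasurable
    have hH := ENNReal.lintegral_mul_le_Lp_mul_Lq volume hpq hf hg
    have h2 : ∀ y : ℝ≥0∞, y ^ (2:ℝ) = y ^ (2:ℕ) := fun y => by
      rw [← ENNReal.rpow_natCast]; norm_num
    have hH' : (∫⁻ w : ℝ × ℝ, (‖F w‖₊ : ℝ≥0∞) *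
        (‖Φ (z.1 - (1-σ)*w.2, z.2 - σ*w.1)‖₊ : ℝ≥0∞)) ≤
        A ^ ((1:ℝ)/2) * (∫⁻ w : ℝ × ℝ, (‖F w‖₊ : ℝ≥0∞) *
          (‖Φ (z.1 - (1-σ)*w.2, z.2 - σ*w.1)‖₊ : ℝ≥0∞) ^ 2) ^ ((1:ℝ)/2) := by
      have e1 : (∫⁻ w : ℝ × ℝ, (‖F w‖₊ : ℝ≥0∞) *
          (‖Φ (z.1 - (1-σ)*w.2, z.2 - σ*w.1)‖₊ : ℝ≥0∞)) =
          ∫⁻ w : ℝ × ℝ, ((fun w : ℝ × ℝ => (‖F w‖₊ : ℝ≥0∞) ^ ((1:ℝ)/2)) *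
            (fun w : ℝ × ℝ => (‖F w‖₊ : ℝ≥0∞) ^ ((1:ℝ)/2) *
              (‖Φ (z.1 - (1-σ)*w.2, z.2 - σ*w.1)‖₊ : ℝ≥0∞))) w := by
        refine lintegral_congr fun w => ?_
        simp only [Pi.mul_apply]
        rw [← mul_assoc, hrpow_half]
      have e2 : (∫⁻ w : ℝ × ℝ, ((‖F w‖₊ : ℝ≥0∞) ^ ((1:ℝ)/2)) ^ (2:ℝ)) = A := by
        refine lintegral_congr fun w => hrpow_sq _
      have e3 : (∫⁻ w : ℝ × ℝ, ((‖F w‖₊ : ℝ≥0∞) ^ ((1:ℝ)/2) *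
          (‖Φ (z.1 - (1-σ)*w.2, z.2 - σ*w.1)‖₊ : ℝ≥0∞)) ^ (2:ℝ)) =
          ∫⁻ w : ℝ × ℝ, (‖F w‖₊ : ℝ≥0∞) *
            (‖Φ (z.1 - (1-σ)*w.2, z.2 - σ*w.1)‖₊ : ℝ≥0∞) ^ 2 := by
        refine lintegral_congr fun w => ?_
        rw [ENNReal.mul_rpow_of_nonneg _ _ (by norm_num : (0:ℝ) ≤ 2), hrpow_sq, h2]
      rw [e1]
      refine le_trans hH ?_
      rw [e2, e3]
    calc (∫⁻ w : ℝ × ℝ, (‖F w‖₊ : ℝ≥0∞) *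
          (‖Φ (z.1 - (1-σ)*w.2, z.2 - σ*w.1)‖₊ : ℝ≥0∞)) ^ 2
        ≤ (A ^ ((1:ℝ)/2) * (∫⁻ w : ℝ × ℝ, (‖F w‖₊ : ℝ≥0∞) *
            (‖Φ (z.1 - (1-σ)*w.2, z.2 - σ*w.1)‖₊ : ℝ≥0∞) ^ 2) ^ ((1:ℝ)/2)) ^ 2 :=
          pow_le_pow_left₀ (zero_le) hH' 2
      _ = A * ∫⁻ w : ℝ × ℝ, (‖F w‖₊ : ℝ≥0∞) *
            (‖Φ (z.1 - (1-σ)*w.2, z.2 - σ*w.1)‖₊ : ℝ≥0∞) ^ 2 := by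
          rw [mul_pow, ← h2 (A ^ ((1:ℝ)/2)), hrpow_sq,
            ← h2 ((∫⁻ w : ℝ × ℝ, (‖F w‖₊ : ℝ≥0∞) *
              (‖Φ (z.1 - (1-σ)*w.2, z.2 - σ*w.1)‖₊ : ℝ≥0∞) ^ 2) ^ ((1:ℝ)/2)), hrpow_sq]
  have hswap : (∫⁻ z : ℝ × ℝ, ∫⁻ w : ℝ × ℝ, (‖F w‖₊ : ℝ≥0∞) *
      (‖Φ (z.1 - (1-σ)*w.2, z.2 - σ*w.1)‖₊ : ℝ≥0∞) ^ 2) = A * B := by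
    rw [lintegral_lintegral_swap]
    · have inner_eq : ∀ w : ℝ × ℝ, (∫⁻ z : ℝ × ℝ, (‖F w‖₊ : ℝ≥0∞) *
          (‖Φ (z.1 - (1-σ)*w.2, z.2 - σ*w.1)‖₊ : ℝ≥0∞) ^ 2) = (‖F w‖₊ : ℝ≥0∞) * B := by
        intro w
        rw [lintegral_const_mul' _ _ ENNReal.coe_ne_top]
        congr 1
        have heq : ∀ z : ℝ × ℝ, (z.1 - (1-σ)*w.2, z.2 - σ*w.1) =
            z - ((1-σ)*w.2, σ*w.1) := fun z => rfl
        simp_rw [heq]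
        exact lintegral_sub_right_eq_self (fun z : ℝ × ℝ => (‖Φ z‖₊ : ℝ≥0∞) ^ 2) _
      simp_rw [inner_eq]
      rw [lintegral_mul_const' _ _ hBfin]
    · apply Measurable.aemeasurable
      apply Measurable.fun_mul
      · exact (F.continuous.measurable.nnnorm.coe_nnreal_ennreal).comp measurable_snd
      · apply Measurable.pow_const
        apply Measurable.coe_nnreal_ennreal
        apply Measurable.nnnorm
        exact (Φ.continuous.comp
          (by fun_prop : Continuous fun p : (ℝ × ℝ) × (ℝ × ℝ) =>
            (p.1.1 - (1-σ)*p.2.2, p.1.2 - σ*p.2.1))).measurable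
  have hS : (∫⁻ z : ℝ × ℝ, (‖starProd hbar σ (⇑Ψ) (⇑Φ) z‖₊ : ℝ≥0∞) ^ 2) ≤
      C^2 * A^2 * B := by
    have step1 : (∫⁻ z : ℝ × ℝ, (‖starProd hbar σ (⇑Ψ) (⇑Φ) z‖₊ : ℝ≥0∞) ^ 2) ≤
        ∫⁻ z : ℝ × ℝ, (C^2 * A) * ∫⁻ w : ℝ × ℝ, (‖F w‖₊ : ℝ≥0∞) *
          (‖Φ (z.1 - (1-σ)*w.2, z.2 - σ*w.1)‖₊ : ℝ≥0∞) ^ 2 := by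
      refine lintegral_mono fun z => ?_
      calc (‖starProd hbar σ (⇑Ψ) (⇑Φ) z‖₊ : ℝ≥0∞) ^ 2
          ≤ (C * ∫⁻ w : ℝ × ℝ, (‖F w‖₊ : ℝ≥0∞) *
              (‖Φ (z.1 - (1-σ)*w.2, z.2 - σ*w.1)‖₊ : ℝ≥0∞)) ^ 2 :=
            pow_le_pow_left₀ (zero_le) (hA1 z) 2
        _ = C^2 * (∫⁻ w : ℝ × ℝ, (‖F w‖₊ : ℝ≥0∞) *
              (‖Φ (z.1 - (1-σ)*w.2, z.2 - σ*w.1)‖₊ : ℝ≥0∞)) ^ 2 := mul_pow _ _ _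
        _ ≤ C^2 * (A * ∫⁻ w : ℝ × ℝ, (‖F w‖₊ : ℝ≥0∞) *
              (‖Φ (z.1 - (1-σ)*w.2, z.2 - σ*w.1)‖₊ : ℝ≥0∞) ^ 2) :=
            mul_le_mul_right (hCS z) _
        _ = (C^2 * A) * ∫⁻ w : ℝ × ℝ, (‖F w‖₊ : ℝ≥0∞) *
              (‖Φ (z.1 - (1-σ)*w.2, z.2 - σ*w.1)‖₊ : ℝ≥0∞) ^ 2 := by rw [mul_assoc]
    refine le_trans step1 ?_
    rw [lintegral_const_mul' _ _
      (ENNReal.mul_ne_top (ENNReal.pow_ne_top hCne) hAfin), hswap]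
    rw [show C^2 * A^2 * B = C^2*A*(A*B) by ring]
  have hcont : Continuous (starProd hbar σ (⇑Ψ) (⇑Φ)) := by
    have h0 : starProd hbar σ (⇑Ψ) (⇑Φ) = fun z : ℝ × ℝ =>
        (1 / (2 * (π:ℂ) * (hbar:ℂ))) *
        ∫ w : ℝ × ℝ, F w * Φ (z.1 - (1-σ)*w.2, z.2 - σ*w.1) *
          Complex.exp ((Complex.I/(hbar:ℂ)) * (w.1*z.1 - w.2*z.2)) := by
      funext z; simp only [starProd, hF]
    rw [h0]
    apply continuous_const.mul
    refine continuous_of_dominated (bound := fun w => ‖F w‖ * M) ?_ ?_ ?_ ?_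
    · intro z
      apply Continuous.aestronglyMeasurable
      refine Continuous.mul (Continuous.mul F.continuous
        (Φ.continuous.comp (by fun_prop))) ?_
      exact Complex.continuous_exp.comp (by fun_prop)
    · intro z
      filter_upwards with w
      rw [norm_mul, norm_mul, hexp _ (hre w.1 z.1 w.2 z.2), mul_one]
      exact mul_le_mul_of_nonneg_left (hM _) (norm_nonneg _)
    · exact F.integrable.norm.mul_const M
    · filter_upwards with w
      refine Continuous.mul (continuous_const.mul
        (Φ.continuous.comp (by fun_prop))) ?_
      exact Complex.continuous_exp.comp (by fun_prop)
  have hSeq : (∫ z : ℝ × ℝ, ‖starProd hbar σ (⇑Ψ) (⇑Φ) z‖ ^ 2) =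
      (∫⁻ z : ℝ × ℝ, (‖starProd hbar σ (⇑Ψ) (⇑Φ) z‖₊ : ℝ≥0∞) ^ 2).toReal := by
    rw [integral_eq_lintegral_of_nonneg_ae (ae_of_all _ fun z => sq_nonneg _)
      ((hcont.norm.pow 2).aestronglyMeasurable)]
    congr 1
    refine lintegral_congr fun z => ?_
    rw [ENNReal.ofReal_pow (norm_nonneg _), (ofReal_norm _).trans (enorm_eq_nnnorm _)]
  have hBeq : (∫ z : ℝ × ℝ, ‖Φ z‖ ^ 2) = B.toReal := by
    rw [integral_eq_lintegral_of_nonneg_ae (ae_of_all _ fun z => sq_nonneg _)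
      ((Φ.continuous.norm.pow 2).aestronglyMeasurable)]
    congr 1
    refine lintegral_congr fun z => ?_
    rw [ENNReal.ofReal_pow (norm_nonneg _), (ofReal_norm _).trans (enorm_eq_nnnorm _)]
  have hAeq : (∫ w : ℝ × ℝ, ‖FT hbar (⇑Ψ) w‖) = A.toReal := by
    simp only [hF]
    rw [integral_eq_lintegral_of_nonneg_ae (ae_of_all _ fun w => norm_nonneg _)
      F.continuous.norm.aestronglyMeasurable]
    congr 1
    exact lintegral_congr fun w => ofReal_norm _
  rw [hSeq, hBeq, hAeq]
  have hfin : C^2 * A^2 * B ≠ ⊤ :=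
    ENNReal.mul_ne_top (ENNReal.mul_ne_top (ENNReal.pow_ne_top hCne)
      (ENNReal.pow_ne_top hAfin)) hBfin
  have h1 : (∫⁻ z : ℝ × ℝ, (‖starProd hbar σ (⇑Ψ) (⇑Φ) z‖₊ : ℝ≥0∞) ^ 2).toReal ≤
      (C^2 * A^2 * B).toReal := ENNReal.toReal_mono hfin hS
  refine le_trans (Real.sqrt_le_sqrt h1) ?_
  rw [ENNReal.toReal_mul, ENNReal.toReal_mul, ENNReal.toReal_pow, ENNReal.toReal_pow]
  rw [show C.toReal ^ 2 * A.toReal ^ 2 * B.toReal =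
    (C.toReal * A.toReal)^2 * B.toReal by ring]
  rw [Real.sqrt_mul (sq_nonneg _), Real.sqrt_sq
    (mul_nonneg ENNReal.toReal_nonneg ENNReal.toReal_nonneg)]
  rw [hC, ENNReal.toReal_ofReal hcpos.le]
end
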